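/- There exist 2×2 strictly accretive matrices A, B such that s₁(A − B) > s₁(A ⊕ B), where A ⊕ B is the block diagonal matrix diag(A,B). For instance A = [[2+2i, −1+2i],[3+2i, 1+i]] and B = [[1+2i, −2−i],[−2−i, 5+i]]. -/

import Mathlib

open MeasureTheory Matrix
open scoped ComplexOrder

/-- The "real part" (Hermitian part) of a complex matrix: `(A + Aᴴ)/2`. -/
noncomputable def mre {m : Type*} (A : Matrix m m ℂ) : Matrix m m ℂ :=
  (1/2 : ℂ) • (A + Aᴴ)

/-- A matrix is accretive if its Hermitian part is positive semidefinite. -/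
def Accretive {m : Type*} [Fintype m] (A : Matrix m m ℂ) : Prop :=
  (mre A).PosSemidef

/-- Principal fractional power `A ^ t` of a matrix whose spectrum avoids `(-∞, 0]`,
given (for `0 < t < 1`) by the standard integral formula
`A^t = (sin (tπ)/π) ∫₀^∞ s^(t-1) A (A + s I)⁻¹ ds`. -/
noncomputable def apow {m : Type*} [Fintype m] [DecidableEq m]
    (A : Matrix m m ℂ) (t : ℝ) : Matrix m m ℂ :=
  if t = 0 then 1 else if t = 1 then A else
    Matrix.of fun i j => ∫ s in Set.Ioi (0 : ℝ),
      (((Real.sin (t * Real.pi) / Real.pi) * s ^ (t - 1)) •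
        (A * (A + (s : ℂ) • (1 : Matrix m m ℂ))⁻¹)) i j

/-- The weighted geometric mean `A ♯ₜ B = A^(1/2) (A^(-1/2) B A^(-1/2))^t A^(1/2)`
of (strictly accretive) matrices. -/
noncomputable def gmean {m : Type*} [Fintype m] [DecidableEq m]
    (A : Matrix m m ℂ) (t : ℝ) (B : Matrix m m ℂ) : Matrix m m ℂ :=
  apow A (1/2) * apow ((apow A (1/2))⁻¹ * B * (apow A (1/2))⁻¹) t * apow A (1/2)

/-- The absolute value `|X| = (Xᴴ X)^(1/2)` of a matrix. -/
noncomputable def absM {m : Type*} [Fintype m] [DecidableEq m]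
    (X : Matrix m m ℂ) : Matrix m m ℂ :=
  (Matrix.posSemidef_conjTranspose_mul_self X).1.eigenvectorUnitary.1 *
    Matrix.diagonal ((↑) ∘ (√·) ∘ (Matrix.posSemidef_conjTranspose_mul_self X).1.eigenvalues) *
    (star (Matrix.posSemidef_conjTranspose_mul_self X).1.eigenvectorUnitary : Matrix m m ℂ)

/-- The `j`-th largest singular value of a complex matrix. -/
noncomputable def singVals {k : ℕ} (T : Matrix (Fin k) (Fin k) ℂ) (j : Fin k) : ℝ :=
  Real.sqrt (((Matrix.posSemidef_conjTranspose_mul_self T).1.eigenvalues ∘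
    Tuple.sort (Matrix.posSemidef_conjTranspose_mul_self T).1.eigenvalues) j.rev)

/-- The `j`-th largest eigenvalue of a Hermitian matrix (junk value `0` otherwise). -/
noncomputable def eigDesc {k : ℕ} (T : Matrix (Fin k) (Fin k) ℂ) (j : Fin k) : ℝ :=
  if h : T.IsHermitian then (h.eigenvalues ∘ Tuple.sort h.eigenvalues) j.rev else 0

/-- The numerical range of `A` lies in the sector
`S_α = {z : Re z ≥ 0, |Im z| ≤ tan α · Re z}`. -/
def InSector {k : ℕ} (α : ℝ) (A : Matrix (Fin k) (Fin k) ℂ) : Prop :=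
  ∀ x : EuclideanSpace ℂ (Fin k), ‖x‖ = 1 →
    0 ≤ (star (x : Fin k → ℂ) ⬝ᵥ A.mulVec (x : Fin k → ℂ)).re ∧
      |(star (x : Fin k → ℂ) ⬝ᵥ A.mulVec (x : Fin k → ℂ)).im| ≤
        Real.tan α * (star (x : Fin k → ℂ) ⬝ᵥ A.mulVec (x : Fin k → ℂ)).re

/- ### Auxiliary lemmas -/

/-- The sum of the eigenvalues of a Hermitian matrix is its trace. -/
lemma eigSum {n : Type*} [Fintype n] [DecidableEq n] {A : Matrix n n ℂ} (hA : A.IsHermitian) :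
    ((∑ i, hA.eigenvalues i : ℝ) : ℂ) = A.trace := by
  conv_rhs => rw [hA.spectral_theorem, Unitary.conjStarAlgAut_apply]
  rw [trace_mul_comm, ← mul_assoc, (Matrix.mem_unitaryGroup_iff').mp (hA.eigenvectorUnitary).2,
    one_mul, trace_diagonal]
  push_cast
  rfl

/-- The sum of the squares of the eigenvalues of a Hermitian matrix is the trace of its
square. -/
lemma eigSqSum {n : Type*} [Fintype n] [DecidableEq n] {A : Matrix n n ℂ}
    (hA : A.IsHermitian) :
    ((∑ i, hA.eigenvalues i ^ 2 : ℝ) : ℂ) = (A * A).trace := by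
  have h1 : A * A = (hA.eigenvectorUnitary : Matrix n n ℂ) *
      (diagonal (RCLike.ofReal ∘ hA.eigenvalues) * diagonal (RCLike.ofReal ∘ hA.eigenvalues)) *
      (star (hA.eigenvectorUnitary : Matrix n n ℂ)) := by
    conv_lhs => rw [hA.spectral_theorem, Unitary.conjStarAlgAut_apply]
    rw [show ∀ U D : Matrix n n ℂ, (U * D * star U) * (U * D * star U)
        = U * D * (star U * U) * D * star U by intros; noncomm_ring,
      (Matrix.mem_unitaryGroup_iff').mp (hA.eigenvectorUnitary).2]
    noncomm_ring
  rw [h1, trace_mul_comm, ← mul_assoc, (Matrix.mem_unitaryGroup_iff').mp (hA.eigenvectorUnitary).2,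
    one_mul, diagonal_mul_diagonal, trace_diagonal]
  push_cast
  simp [sq]

/-- The last entry of a sorted tuple dominates all entries. -/
lemma le_sortLast {n : ℕ} (f : Fin (n + 1) → ℝ) (i : Fin (n + 1)) :
    f i ≤ (f ∘ Tuple.sort f) (Fin.last n) := by
  obtain ⟨j, hj⟩ := (Tuple.sort f).surjective i
  calc f i = (f ∘ Tuple.sort f) j := by rw [Function.comp_apply, hj]
  _ ≤ _ := Tuple.monotone_sort f (Fin.le_last j)

/-- Upper bound on the largest singular-value-squared via `tr((TᴴT)²)`. -/
lemma top_eig_le {k : ℕ} (T : Matrix (Fin (k + 1)) (Fin (k + 1)) ℂ) (r : ℝ)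
    (h : ((Tᴴ * T) * (Tᴴ * T)).trace = (r : ℂ)) :
    ((Matrix.posSemidef_conjTranspose_mul_self T).1.eigenvalues ∘
      Tuple.sort (Matrix.posSemidef_conjTranspose_mul_self T).1.eigenvalues) (Fin.last k) ≤
      Real.sqrt r := by
  have h0 := Matrix.posSemidef_conjTranspose_mul_self T
  set f := h0.1.eigenvalues with hf
  have hsum : (∑ i, f i ^ 2 : ℝ) = r := by
    have := (eigSqSum h0.1).trans h
    exact_mod_cast this
  set j := Tuple.sort f (Fin.last k) with hj
  have hfj : (f ∘ Tuple.sort f) (Fin.last k) = f j := rfl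
  rw [hfj]
  have hnn : 0 ≤ f j := h0.eigenvalues_nonneg j
  have hsq : f j ^ 2 ≤ r := by
    rw [← hsum]
    exact Finset.single_le_sum (f := fun i => f i ^ 2)
      (fun i _ => sq_nonneg (f i)) (Finset.mem_univ j)
  have := Real.sqrt_le_sqrt hsq
  rwa [Real.sqrt_sq hnn] at this

/-- Lower bound on the largest singular-value-squared via `tr((TᴴT)²)/tr(TᴴT)`. -/
lemma top_eig_ge {k : ℕ} (T : Matrix (Fin (k + 1)) (Fin (k + 1)) ℂ) (s r : ℝ) (hs : 0 < s)
    (h1 : (Tᴴ * T).trace = (s : ℂ)) (h2 : ((Tᴴ * T) * (Tᴴ * T)).trace = (r : ℂ)) :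
    r / s ≤ ((Matrix.posSemidef_conjTranspose_mul_self T).1.eigenvalues ∘
      Tuple.sort (Matrix.posSemidef_conjTranspose_mul_self T).1.eigenvalues) (Fin.last k) := by
  have h0 := Matrix.posSemidef_conjTranspose_mul_self T
  set f := h0.1.eigenvalues with hf
  set L := (f ∘ Tuple.sort f) (Fin.last k) with hL
  have hsum : (∑ i, f i : ℝ) = s := by
    have := (eigSum h0.1).trans h1
    exact_mod_cast this
  have hsqsum : (∑ i, f i ^ 2 : ℝ) = r := by
    have := (eigSqSum h0.1).trans h2
    exact_mod_cast this
  have hbd : r ≤ L * s := by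
    rw [← hsum, ← hsqsum, Finset.mul_sum]
    refine Finset.sum_le_sum fun i _ => ?_
    have := le_sortLast f i
    have hnn : 0 ≤ f i := h0.eigenvalues_nonneg i
    calc f i ^ 2 = f i * f i := sq (f i) ▸ rfl
    _ ≤ L * f i := mul_le_mul_of_nonneg_right this hnn
  rw [div_le_iff₀ hs]
  exact hbd

/-- the explicit 2×2 strictly accretive matrices `A`, `B` of the paper
satisfy `s₁(A ⊕ B) < s₁(A - B)`. -/
theorem stmt7 :
    ∃ A B : Matrix (Fin 2) (Fin 2) ℂ,
      A = !![2 + 2*Complex.I, -1 + 2*Complex.I; 3 + 2*Complex.I, 1 + Complex.I] ∧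
      B = !![1 + 2*Complex.I, -2 - Complex.I; -2 - Complex.I, 5 + Complex.I] ∧
      (mre A).PosDef ∧ (mre B).PosDef ∧
      singVals (Matrix.reindex finSumFinEquiv finSumFinEquiv
          (Matrix.fromBlocks A 0 0 B)) (0 : Fin (2 + 2)) <
        singVals (A - B) (0 : Fin 2) := by
  refine ⟨_, _, rfl, rfl, ?_, ?_, ?_⟩
  · -- mre A is positive definite
    have hm : mre !![2 + 2*Complex.I, -1 + 2*Complex.I; 3 + 2*Complex.I, 1 + Complex.I]
        = !![2, 1; 1, 1] := by
      ext i j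
      fin_cases i <;> fin_cases j <;>
        simp [mre, Matrix.conjTranspose_apply] <;> ring_nf
    rw [hm]
    refine Matrix.PosDef.of_dotProduct_mulVec_pos ?_ ?_
    · ext i j
      fin_cases i <;> fin_cases j <;> simp [Matrix.conjTranspose_apply]
    · intro x hx
      have hd : star x ⬝ᵥ (!![2, 1; 1, 1] : Matrix (Fin 2) (Fin 2) ℂ) *ᵥ x
          = ((Complex.normSq (x 0) + Complex.normSq (x 0 + x 1) : ℝ) : ℂ) := by
        simp [dotProduct, Matrix.mulVec, Fin.sum_univ_two, Complex.ext_iff,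
          Complex.normSq_apply]
        constructor <;> ring
      rw [hd, Complex.zero_lt_real]
      by_cases h0 : x 0 = 0
      · have h1 : x 1 ≠ 0 := by
          intro h1; apply hx; ext i; fin_cases i <;> simp [h0, h1]
        have h2 : x 0 + x 1 ≠ 0 := by simpa [h0] using h1
        linarith [Complex.normSq_pos.mpr h2, Complex.normSq_nonneg (x 0)]
      · linarith [Complex.normSq_pos.mpr h0, Complex.normSq_nonneg (x 0 + x 1)]
  · -- mre B is positive definite
    have hm : mre !![1 + 2*Complex.I, -2 - Complex.I; -2 - Complex.I, 5 + Complex.I]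
        = !![1, -2; -2, 5] := by
      ext i j
      fin_cases i <;> fin_cases j <;>
        simp [mre, Matrix.conjTranspose_apply] <;> ring_nf
    rw [hm]
    refine Matrix.PosDef.of_dotProduct_mulVec_pos ?_ ?_
    · ext i j
      fin_cases i <;> fin_cases j <;> simp [Matrix.conjTranspose_apply]
    · intro x hx
      have hd : star x ⬝ᵥ (!![1, -2; -2, 5] : Matrix (Fin 2) (Fin 2) ℂ) *ᵥ x
          = ((Complex.normSq (x 0 - 2 * x 1) + Complex.normSq (x 1) : ℝ) : ℂ) := by
        simp [dotProduct, Matrix.mulVec, Fin.sum_univ_two, Complex.ext_iff,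
          Complex.normSq_apply]
        constructor <;> ring
      rw [hd, Complex.zero_lt_real]
      by_cases h1 : x 1 = 0
      · have h0 : x 0 ≠ 0 := by
          intro h0; apply hx; ext i; fin_cases i <;> simp [h0, h1]
        have h2 : x 0 - 2 * x 1 ≠ 0 := by simpa [h1] using h0
        linarith [Complex.normSq_pos.mpr h2, Complex.normSq_nonneg (x 1)]
      · linarith [Complex.normSq_pos.mpr h1, Complex.normSq_nonneg (x 0 - 2 * x 1)]
  · -- the singular value inequality
    have hT : (Matrix.reindex finSumFinEquiv finSumFinEquiv
        (Matrix.fromBlocks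
          !![2 + 2*Complex.I, -1 + 2*Complex.I; 3 + 2*Complex.I, 1 + Complex.I] 0 0
          !![1 + 2*Complex.I, -2 - Complex.I; -2 - Complex.I, 5 + Complex.I]))
        = !![2 + 2*Complex.I, -1 + 2*Complex.I, 0, 0;
             3 + 2*Complex.I, 1 + Complex.I, 0, 0;
             0, 0, 1 + 2*Complex.I, -2 - Complex.I;
             0, 0, -2 - Complex.I, 5 + Complex.I] := by
      ext i j
      fin_cases i <;> fin_cases j <;> simp [Matrix.fromBlocks, finSumFinEquiv] <;> rfl
    have hD : (!![2 + 2*Complex.I, -1 + 2*Complex.I; 3 + 2*Complex.I, 1 + Complex.I]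
        - !![1 + 2*Complex.I, -2 - Complex.I; -2 - Complex.I, 5 + Complex.I])
        = !![1, 1 + 3*Complex.I; 5 + 3*Complex.I, -4] := by
      ext i j
      fin_cases i <;> fin_cases j <;>
        simp [Matrix.sub_apply] <;> ring_nf
    rw [hT, hD]
    set M4 : Matrix (Fin 4) (Fin 4) ℂ :=
      !![2 + 2*Complex.I, -1 + 2*Complex.I, 0, 0;
         3 + 2*Complex.I, 1 + Complex.I, 0, 0;
         0, 0, 1 + 2*Complex.I, -2 - Complex.I;
         0, 0, -2 - Complex.I, 5 + Complex.I] with hM4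
    set M2 : Matrix (Fin 2) (Fin 2) ℂ := !![1, 1 + 3*Complex.I; 5 + 3*Complex.I, -4] with hM2
    have ht4 : ((M4ᴴ * M4) * (M4ᴴ * M4)).trace = ((2269 : ℝ) : ℂ) := by
      simp only [hM4]
      simp [Matrix.trace, Matrix.mul_apply, Fin.sum_univ_four, Matrix.conjTranspose_apply]
      norm_num [Complex.ext_iff]
    have ht2a : (M2ᴴ * M2).trace = ((61 : ℝ) : ℂ) := by
      simp only [hM2]
      simp [Matrix.trace, Matrix.mul_apply, Fin.sum_univ_two, Matrix.conjTranspose_apply]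
      norm_num [Complex.ext_iff]
    have ht2b : ((M2ᴴ * M2) * (M2ᴴ * M2)).trace = ((3073 : ℝ) : ℂ) := by
      simp only [hM2]
      simp [Matrix.trace, Matrix.mul_apply, Fin.sum_univ_two, Matrix.conjTranspose_apply]
      norm_num [Complex.ext_iff]
    have h4 := top_eig_le (k := 3) M4 2269 ht4
    have h2 := top_eig_ge (k := 1) M2 61 3073 (by norm_num) ht2a ht2b
    unfold singVals
    have hrev4 : (0 : Fin (2 + 2)).rev = Fin.last 3 := by decide
    have hrev2 : (0 : Fin 2).rev = Fin.last 1 := by decide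
    rw [hrev4, hrev2]
    apply Real.sqrt_lt_sqrt
    · exact (Matrix.posSemidef_conjTranspose_mul_self M4).eigenvalues_nonneg _
    · refine lt_of_le_of_lt h4 (lt_of_lt_of_le ?_ h2)
      rw [show (3073 : ℝ) / 61 = Real.sqrt ((3073 / 61) ^ 2) by
        rw [Real.sqrt_sq (by norm_num)]]
      apply Real.sqrt_lt_sqrt (by norm_num)
      norm_num
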